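/- There is an absolute constant C > 0 such that for all real x ≥ 2: #{ n : n is a positive integer, n ≤ x, and n^♭ ≤ x/(log x)^3 } ≤ C · x / log x. -/

import Mathlib

open Finset Real Classical

/-- A positive integer `m` is squarefull if every prime dividing it does so to order at least 2. -/
def Squarefull (m : ℕ) : Prop := ∀ p : ℕ, p.Prime → p ∣ m → p ^ 2 ∣ m

/-- `s(n)`, the largest squarefull divisor of `n`. -/
noncomputable def sfPart (n : ℕ) : ℕ := sSup {d : ℕ | d ∣ n ∧ Squarefull d}

/-- `n^♭ = n / s(n)`, the quotient of `n` by its largest squarefull divisor. -/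
noncomputable def flat (n : ℕ) : ℕ := n / sfPart n

lemma squarefull_one : Squarefull 1 := by
  intro p hp hpd
  exact absurd (Nat.eq_one_of_dvd_one hpd ▸ hp) Nat.not_prime_one

lemma sfPart_spec {n : ℕ} (hn : n ≠ 0) : sfPart n ∣ n ∧ Squarefull (sfPart n) := by
  have hbdd : BddAbove {d : ℕ | d ∣ n ∧ Squarefull d} :=
    ⟨n, fun d hd => Nat.le_of_dvd (Nat.pos_of_ne_zero hn) hd.1⟩
  have hne : {d : ℕ | d ∣ n ∧ Squarefull d}.Nonempty := ⟨1, one_dvd n, squarefull_one⟩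
  exact Nat.sSup_mem hne hbdd

lemma sfPart_pos {n : ℕ} (hn : n ≠ 0) : 0 < sfPart n :=
  Nat.pos_of_dvd_of_pos (sfPart_spec hn).1 (Nat.pos_of_ne_zero hn)

lemma flat_mul_sfPart {n : ℕ} (hn : n ≠ 0) : flat n * sfPart n = n :=
  Nat.div_mul_cancel (sfPart_spec hn).1

lemma flat_pos {n : ℕ} (hn : n ≠ 0) : 0 < flat n := by
  rcases Nat.eq_zero_or_pos (flat n) with h | h
  · exfalso; apply hn; rw [← flat_mul_sfPart hn, h, zero_mul]
  · exact h

/-- every squarefull number is of the form a^3 * e^2 -/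
lemma squarefull_decomp {m : ℕ} (hm : m ≠ 0) (h : Squarefull m) :
    ∃ a e : ℕ, 1 ≤ a ∧ 1 ≤ e ∧ m = a ^ 3 * e ^ 2 := by
  obtain ⟨a, b, hab, ha⟩ := Nat.sq_mul_squarefree m
  have ha0 : a ≠ 0 := by rintro rfl; simp at hab; exact hm hab.symm
  have hb0 : b ≠ 0 := by rintro rfl; simp at hab; exact hm hab.symm
  have hdvd : a ∣ b := by
    rw [← Nat.factorization_le_iff_dvd ha0 hb0]
    intro p
    rcases Nat.eq_zero_or_pos (a.factorization p) with h0 | h0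
    · simp [h0]
    have hmem : p ∈ a.primeFactors := by
      rw [← Nat.support_factorization]
      exact Finsupp.mem_support_iff.2 (by omega)
    have hp : p.Prime := Nat.prime_of_mem_primeFactors hmem
    have hpa : p ∣ a := Nat.dvd_of_mem_primeFactors hmem
    have hpm : p ∣ m := hab ▸ Dvd.dvd.mul_left hpa (b ^ 2)
    have hp2 : p ^ 2 ∣ m := h p hp hpm
    have hpb : p ∣ b := by
      by_contra hnb
      have hcop : (p ^ 2).Coprime (b ^ 2) :=
        Nat.Coprime.pow _ _ (hp.coprime_iff_not_dvd.mpr hnb)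
      have h2a : p ^ 2 ∣ a := Nat.Coprime.dvd_of_dvd_mul_left hcop (hab ▸ hp2)
      exact hp.not_isUnit (ha p (by rw [← sq]; exact h2a))
    have : 1 ≤ b.factorization p := (hp.dvd_iff_one_le_factorization hb0).1 hpb
    have := ha.natFactorization_le_one p
    omega
  obtain ⟨e, rfl⟩ := hdvd
  refine ⟨a, e, Nat.one_le_iff_ne_zero.2 ha0, Nat.one_le_iff_ne_zero.2 (by rintro rfl; simp at hb0), ?_⟩
  rw [← hab]; ring

lemma sum_inv_sqrt_le (B : ℕ) : ∑ f ∈ Icc 1 B, (√(f:ℝ))⁻¹ ≤ 2 * √B := by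
  induction B with
  | zero => simp
  | succ B ih =>
    rw [← Finset.Ico_add_one_right_eq_Icc, Finset.sum_Ico_succ_top (by omega), Finset.Ico_add_one_right_eq_Icc]
    have hs : √(B:ℝ) ^ 2 = B := Real.sq_sqrt (by positivity)
    have ht : √((B:ℝ)+1) ^ 2 = (B:ℝ)+1 := Real.sq_sqrt (by positivity)
    have hs0 : 0 ≤ √(B:ℝ) := Real.sqrt_nonneg _
    have ht0 : 0 < √((B:ℝ)+1) := Real.sqrt_pos.2 (by positivity)
    have key : (√((B+1:ℕ):ℝ))⁻¹ ≤ 2 * √((B+1:ℕ):ℝ) - 2 * √(B:ℝ) := by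
      push_cast
      rw [inv_le_iff_one_le_mul₀ ht0]
      nlinarith [sq_nonneg (√((B:ℝ)+1) - √(B:ℝ))]
    calc ∑ f ∈ Icc 1 B, (√(f:ℝ))⁻¹ + (√((B+1:ℕ):ℝ))⁻¹
        ≤ 2 * √(B:ℝ) + (2 * √((B+1:ℕ):ℝ) - 2 * √(B:ℝ)) := by push_cast at key ⊢; linarith
      _ = 2 * √((B+1:ℕ):ℝ) := by ring

lemma sum_inv_pow32_le (B : ℕ) : ∑ b ∈ Icc 1 B, ((b:ℝ) * √b)⁻¹ ≤ 3 := by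
  have main : ∀ B : ℕ, 1 ≤ B → ∑ b ∈ Icc 1 B, ((b:ℝ) * √b)⁻¹ ≤ 3 - 2 * (√B)⁻¹ := by
    intro B hB
    induction B with
    | zero => omega
    | succ B ih =>
      rcases Nat.eq_zero_or_pos B with rfl | hB1
      · norm_num
      rw [← Finset.Ico_add_one_right_eq_Icc, Finset.sum_Ico_succ_top (by omega), Finset.Ico_add_one_right_eq_Icc]
      have ih' := ih hB1
      have hs : √(B:ℝ) ^ 2 = B := Real.sq_sqrt (by positivity)
      have ht : √((B:ℝ)+1) ^ 2 = (B:ℝ)+1 := Real.sq_sqrt (by positivity)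
      have hs0 : 0 < √(B:ℝ) := Real.sqrt_pos.2 (by exact_mod_cast hB1)
      have ht0 : 0 < √((B:ℝ)+1) := Real.sqrt_pos.2 (by positivity)
      have hts : √(B:ℝ) ≤ √((B:ℝ)+1) := Real.sqrt_le_sqrt (by linarith)
      have hd : (√((B:ℝ)+1) - √B) * (√((B:ℝ)+1) + √B) = 1 := by nlinarith
      have key : (((B+1:ℕ):ℝ) * √((B+1:ℕ):ℝ))⁻¹ ≤ 2 * (√(B:ℝ))⁻¹ - 2 * (√((B+1:ℕ):ℝ))⁻¹ := by
        push_cast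
        rw [show (2:ℝ) * (√(B:ℝ))⁻¹ - 2 * (√((B:ℝ)+1))⁻¹
            = (2*√((B:ℝ)+1) - 2*√B)/(√B * √((B:ℝ)+1)) by field_simp,
          inv_eq_one_div, div_le_div_iff₀ (by positivity) (by positivity)]
        nlinarith [hd, mul_pos hs0 ht0, mul_pos (mul_pos hs0 ht0) ht0,
          mul_le_mul_of_nonneg_right hts (mul_nonneg ht0.le ht0.le),
          mul_pos ht0 ht0]
      push_cast at ih' key ⊢
      linarith
  rcases Nat.eq_zero_or_pos B with rfl | hB1
  · simp
  have := main B hB1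
  have : 0 < √(B:ℝ) := Real.sqrt_pos.2 (by exact_mod_cast hB1)
  have h2 : 0 ≤ 2 * (√(B:ℝ))⁻¹ := by positivity
  linarith [main B hB1]

lemma card_squarefull_le (T : ℝ) (hT : 0 ≤ T) :
    ((((Icc 1 ⌊T⌋₊).filter Squarefull).card : ℝ)) ≤ 3 * √T := by
  classical
  set N := ⌊T⌋₊ with hN
  set g : ℕ → ℕ × ℕ := fun m =>
    if h : ∃ p : ℕ × ℕ, 1 ≤ p.1 ∧ 1 ≤ p.2 ∧ m = p.1 ^ 3 * p.2 ^ 2 then h.choose else (0,0)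
    with hg
  have hgspec : ∀ m ∈ (Icc 1 N).filter Squarefull,
      1 ≤ (g m).1 ∧ 1 ≤ (g m).2 ∧ m = (g m).1 ^ 3 * (g m).2 ^ 2 := by
    intro m hm
    simp only [mem_filter, mem_Icc] at hm
    have hex : ∃ p : ℕ × ℕ, 1 ≤ p.1 ∧ 1 ≤ p.2 ∧ m = p.1 ^ 3 * p.2 ^ 2 := by
      obtain ⟨a, e, ha, he, hme⟩ := squarefull_decomp (by omega) hm.2
      exact ⟨(a,e), ha, he, hme⟩
    rw [hg]; simp only [hex, dif_pos]
    exact hex.choose_spec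
  set tgt : Finset (ℕ × ℕ) :=
    (Icc 1 N).biUnion (fun a => (Icc 1 ⌊√(T/(a:ℝ)^3)⌋₊).image (fun e => (a,e))) with htgt
  have hmaps : ∀ m ∈ (Icc 1 N).filter Squarefull, g m ∈ tgt := by
    intro m hm
    obtain ⟨ha, he, hme⟩ := hgspec m hm
    simp only [mem_filter, mem_Icc] at hm
    set a := (g m).1; set e := (g m).2
    have haN : a ≤ N := le_trans (le_trans (Nat.le_self_pow (by norm_num) a)
      (Nat.le_mul_of_pos_right _ (by positivity))) (hme ▸ hm.1.2)
    have hmT : (m : ℝ) ≤ T := le_trans (Nat.cast_le.2 hm.1.2) (Nat.floor_le hT)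
    have heT : (e : ℝ) ≤ √(T/(a:ℝ)^3) := by
      rw [Real.le_sqrt (by positivity), le_div_iff₀ (by positivity)]
      swap
      · exact div_nonneg hT (by positivity)
      calc (e:ℝ)^2 * (a:ℝ)^3 = ((a^3 * e^2 : ℕ) : ℝ) := by push_cast; ring
        _ = (m:ℝ) := by rw [← hme]
        _ ≤ T := hmT
    rw [htgt, mem_biUnion]
    exact ⟨a, mem_Icc.2 ⟨ha, haN⟩, mem_image.2 ⟨e, mem_Icc.2 ⟨he, Nat.le_floor heT⟩, rfl⟩⟩
  have hinj : Set.InjOn g ((Icc 1 N).filter Squarefull) := by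
    intro m1 h1 m2 h2 heq
    obtain ⟨_, _, e1⟩ := hgspec m1 h1
    obtain ⟨_, _, e2⟩ := hgspec m2 h2
    rw [e1, e2, heq]
  have hcard := Finset.card_le_card_of_injOn g hmaps hinj
  have hcard2 : (tgt.card : ℝ) ≤ ∑ a ∈ Icc 1 N, (⌊√(T/(a:ℝ)^3)⌋₊ : ℝ) := by
    have hb : tgt.card ≤ ∑ a ∈ Icc 1 N, ((Icc 1 ⌊√(T/(a:ℝ)^3)⌋₊).image (fun e => (a,e))).card :=
      Finset.card_biUnion_le
    calc (tgt.card : ℝ) ≤ ((∑ a ∈ Icc 1 N, ((Icc 1 ⌊√(T/(a:ℝ)^3)⌋₊).image (fun e => (a,e))).card : ℕ) : ℝ) := by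
          exact_mod_cast hb
      _ ≤ ∑ a ∈ Icc 1 N, (⌊√(T/(a:ℝ)^3)⌋₊ : ℝ) := by
          push_cast
          refine Finset.sum_le_sum fun a _ => ?_
          calc (((Icc 1 ⌊√(T/(a:ℝ)^3)⌋₊).image (fun e => (a,e))).card : ℝ)
              ≤ ((Icc 1 ⌊√(T/(a:ℝ)^3)⌋₊).card : ℝ) := by exact_mod_cast Finset.card_image_le
            _ ≤ _ := by rw [Nat.card_Icc]; push_cast; norm_num
  have hsum : ∑ a ∈ Icc 1 N, (⌊√(T/(a:ℝ)^3)⌋₊ : ℝ) ≤ 3 * √T := by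
    calc ∑ a ∈ Icc 1 N, (⌊√(T/(a:ℝ)^3)⌋₊ : ℝ)
        ≤ ∑ a ∈ Icc 1 N, √T * ((a:ℝ) * √a)⁻¹ := by
          refine Finset.sum_le_sum fun a ha => ?_
          have ha1 : 1 ≤ a := (mem_Icc.1 ha).1
          have ha0 : (0:ℝ) < a := by exact_mod_cast ha1
          have hsq : √(T/(a:ℝ)^3) = √T * ((a:ℝ) * √a)⁻¹ := by
            rw [Real.sqrt_div hT, show ((a:ℝ)^3) = ((a:ℝ)*√a)^2 by
              rw [mul_pow, Real.sq_sqrt ha0.le]; ring,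
              Real.sqrt_sq (by positivity), div_eq_mul_inv]
          rw [← hsq]
          exact Nat.floor_le (Real.sqrt_nonneg _)
      _ = √T * ∑ a ∈ Icc 1 N, ((a:ℝ) * √a)⁻¹ := by rw [Finset.mul_sum]
      _ ≤ √T * 3 := by
          refine mul_le_mul_of_nonneg_left (sum_inv_pow32_le N) (Real.sqrt_nonneg _)
      _ = 3 * √T := by ring
  calc (((Icc 1 N).filter Squarefull).card : ℝ) ≤ (tgt.card : ℝ) := by exact_mod_cast hcard
    _ ≤ _ := le_trans hcard2 hsum

/-- Estimate (8.1) of the paper: the number of `n ≤ x` whose squarefree-ish part `n^♭`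
is at most `x/(log x)^3` is `≪ x / log x`. -/
theorem count_small_flat_part :
    ∃ C : ℝ, 0 < C ∧
      ∀ x : ℝ, 2 ≤ x →
        (((Finset.Icc 1 ⌊x⌋₊).filter
            (fun n => (flat n : ℝ) ≤ x / Real.log x ^ 3)).card : ℝ)
          ≤ C * x / Real.log x := by
  refine ⟨6, by norm_num, fun x hx => ?_⟩
  have hx0 : (0:ℝ) < x := by linarith
  have hL : 0 < Real.log x := Real.log_pos (by linarith)
  set L := Real.log x with hLdef
  set y := x / L ^ 3 with hy
  have hy0 : 0 ≤ y := by positivity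
  set S := (Finset.Icc 1 ⌊x⌋₊).filter (fun n => (flat n : ℝ) ≤ x / L ^ 3) with hS
  by_cases hL1 : 1 ≤ L
  · -- main case
    set tgt : Finset (ℕ × ℕ) := (Icc 1 ⌊y⌋₊).biUnion
      (fun f => ((Icc 1 ⌊x/(f:ℝ)⌋₊).filter Squarefull).image (fun s => (f,s))) with htgt
    have hmaps : ∀ n ∈ S, (flat n, sfPart n) ∈ tgt := by
      intro n hn
      simp only [hS, mem_filter, mem_Icc] at hn
      have hn0 : n ≠ 0 := by omega
      have hf1 : 1 ≤ flat n := flat_pos hn0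
      have hfY : flat n ≤ ⌊y⌋₊ := Nat.le_floor hn.2
      have hs1 : 1 ≤ sfPart n := sfPart_pos hn0
      have hnx : (n : ℝ) ≤ x := le_trans (Nat.cast_le.2 hn.1.2) (Nat.floor_le hx0.le)
      have hsx : (sfPart n : ℝ) ≤ x / (flat n : ℝ) := by
        rw [le_div_iff₀ (by exact_mod_cast hf1)]
        calc (sfPart n : ℝ) * (flat n : ℝ) = ((flat n * sfPart n : ℕ) : ℝ) := by push_cast; ring
          _ = (n : ℝ) := by rw [flat_mul_sfPart hn0]
          _ ≤ x := hnx
      rw [htgt, mem_biUnion]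
      exact ⟨flat n, mem_Icc.2 ⟨hf1, hfY⟩, mem_image.2
        ⟨sfPart n, mem_filter.2 ⟨mem_Icc.2 ⟨hs1, Nat.le_floor hsx⟩, (sfPart_spec hn0).2⟩, rfl⟩⟩
    have hinj : Set.InjOn (fun n => (flat n, sfPart n)) S := by
      intro n1 h1 n2 h2 heq
      simp only [hS, Finset.mem_coe, mem_filter, mem_Icc] at h1 h2
      have e1 : flat n1 = flat n2 := congrArg Prod.fst heq
      have e2 : sfPart n1 = sfPart n2 := congrArg Prod.snd heq
      have h10 : n1 ≠ 0 := Nat.one_le_iff_ne_zero.mp h1.1.1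
      have h20 : n2 ≠ 0 := Nat.one_le_iff_ne_zero.mp h2.1.1
      rw [← flat_mul_sfPart h10, ← flat_mul_sfPart h20, e1, e2]
    have hcard : S.card ≤ tgt.card := Finset.card_le_card_of_injOn _ hmaps hinj
    have hb : tgt.card ≤ ∑ f ∈ Icc 1 ⌊y⌋₊, ((Icc 1 ⌊x/(f:ℝ)⌋₊).filter Squarefull).card := by
      refine le_trans Finset.card_biUnion_le (Finset.sum_le_sum fun f _ => Finset.card_image_le)
    have hsum : ((∑ f ∈ Icc 1 ⌊y⌋₊, ((Icc 1 ⌊x/(f:ℝ)⌋₊).filter Squarefull).card : ℕ) : ℝ)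
        ≤ 6 * √x * √y := by
      push_cast
      calc ∑ f ∈ Icc 1 ⌊y⌋₊, (((Icc 1 ⌊x/(f:ℝ)⌋₊).filter Squarefull).card : ℝ)
          ≤ ∑ f ∈ Icc 1 ⌊y⌋₊, 3 * √(x/(f:ℝ)) := by
            refine Finset.sum_le_sum fun f hf => ?_
            have hf1 : (1:ℝ) ≤ (f:ℝ) := by exact_mod_cast (mem_Icc.1 hf).1
            exact card_squarefull_le _ (div_nonneg hx0.le (by linarith))
        _ = 3 * √x * ∑ f ∈ Icc 1 ⌊y⌋₊, (√(f:ℝ))⁻¹ := by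
            rw [Finset.mul_sum]
            refine Finset.sum_congr rfl fun f hf => ?_
            have hf1 : (1:ℝ) ≤ (f:ℝ) := by exact_mod_cast (mem_Icc.1 hf).1
            rw [Real.sqrt_div hx0.le, div_eq_mul_inv]
            ring
        _ ≤ 3 * √x * (2 * √(⌊y⌋₊ : ℝ)) := by
            refine mul_le_mul_of_nonneg_left (sum_inv_sqrt_le _) (by positivity)
        _ ≤ 3 * √x * (2 * √y) := by
            refine mul_le_mul_of_nonneg_left (mul_le_mul_of_nonneg_left
              (Real.sqrt_le_sqrt (Nat.floor_le hy0)) (by norm_num)) (by positivity)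
        _ = 6 * √x * √y := by ring
    have hfinal : 6 * √x * √y ≤ 6 * x / L := by
      have hsy : √y = √x / (L * √L) := by
        rw [hy, Real.sqrt_div hx0.le, show L^3 = (L*√L)^2 by
          rw [mul_pow, Real.sq_sqrt hL.le]; ring, Real.sqrt_sq (by positivity)]
      rw [hsy]
      have hxx : √x * √x = x := Real.mul_self_sqrt hx0.le
      have hLL : L ≤ L * √L := by
        nlinarith [Real.sqrt_le_sqrt hL1, Real.sqrt_one, Real.sqrt_nonneg L]
      have : x / (L * √L) ≤ x / L := by
        refine div_le_div_of_nonneg_left hx0.le hL hLL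
      calc 6 * √x * (√x / (L * √L)) = 6 * ((√x * √x) / (L * √L)) := by ring
        _ = 6 * (x / (L * √L)) := by rw [hxx]
        _ ≤ 6 * (x / L) := by linarith
        _ = 6 * x / L := by ring
    calc (S.card : ℝ) ≤ ((∑ f ∈ Icc 1 ⌊y⌋₊, ((Icc 1 ⌊x/(f:ℝ)⌋₊).filter Squarefull).card : ℕ) : ℝ) := by
          exact_mod_cast le_trans hcard hb
      _ ≤ 6 * √x * √y := hsum
      _ ≤ 6 * x / L := hfinal
  · -- small x case
    push_neg at hL1
    have h1 : (S.card : ℝ) ≤ (⌊x⌋₊ : ℝ) := by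
      have : S.card ≤ (Finset.Icc 1 ⌊x⌋₊).card := Finset.card_filter_le _ _
      calc (S.card : ℝ) ≤ ((Finset.Icc 1 ⌊x⌋₊).card : ℝ) := by exact_mod_cast this
        _ = (⌊x⌋₊ : ℝ) := by rw [Nat.card_Icc]; push_cast; norm_num
    have h2 : (⌊x⌋₊ : ℝ) ≤ x := Nat.floor_le hx0.le
    have : x ≤ 6 * x / L := by
      rw [le_div_iff₀ hL]
      nlinarith
    linarith
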